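/- Let u = u_1...u_m and v = v_1...v_n be nonempty words over integers ≥ 2. Then K̇^∘(u*v) − K̇^∘(uv) = ([u*]• − [u]•)·([v]• − [v*]•)·K̇(u)·K̇(v), where [w]• = K̇(w_2...w_k)/K̇(w_1...w_k) is the value of the semi-regular continued fraction, w* is the reversal of w, and K̇^∘ is the cyclic semi-regular continuant. -/

import Mathlib

/-- Semi-regular continuant read from the last element: helper on the reversed list. -/
def contKsf {R : Type*} [Ring R] : List R → R
  | [] => 1
  | [a] => a
  | a :: b :: l => a * contKsf (b :: l) - contKsf l

/-- Semi-regular continuant `K̇`. -/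
def contKs {R : Type*} [Ring R] (l : List R) : R := contKsf l.reverse

/-- Cyclic semi-regular continuant: `K̇∘(x₁…xₙ) = K̇(x₁…xₙ) − K̇(x₂…xₙ₋₁)`. -/
def cycKs {R : Type*} [Ring R] (l : List R) : R := contKs l - contKs l.tail.dropLast

/-- Value of the semi-regular continued fraction `[w]• = K̇(w₂…w_k)/K̇(w₁…w_k)`. -/
def valSCF (w : List ℤ) : ℚ := (contKs w.tail : ℚ) / (contKs w : ℚ)

namespace StmtAux

variable {R : Type*} [CommRing R]

/-- continuant of the tail (0 for the empty word). -/
def Tf : List R → R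
  | [] => 0
  | _ :: t => contKsf t

/-- continuant of the dropLast (0 for the empty word). -/
def Df : List R → R
  | [] => 0
  | a :: t => contKsf ((a :: t).dropLast)

/-- continuant of tail ∘ dropLast (−1 for the empty word). -/
def Ef : List R → R
  | [] => -1
  | _ :: t => Df t

lemma F_cons (a : R) (l : List R) : contKsf (a :: l) = a * contKsf l - Tf l := by
  cases l <;> simp [contKsf, Tf]

lemma Tf_dropLast (a : R) (t : List R) : Tf ((a :: t).dropLast) = Ef (a :: t) := by
  cases t <;> simp [Tf, Df, Ef]

lemma D_cons (a : R) (l : List R) : Df (a :: l) = a * Df l - Ef l := by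
  cases l with
  | nil => simp [Df, Ef, contKsf]
  | cons b t =>
    show contKsf ((a :: b :: t).dropLast) = _
    rw [List.dropLast_cons₂, F_cons, Tf_dropLast]
    rfl

lemma concat (x y : List R) :
    contKsf (x ++ y) = contKsf x * contKsf y - Df x * Tf y ∧
    Tf (x ++ y) = Tf x * contKsf y - Ef x * Tf y ∧
    Df (x ++ y) = contKsf x * Df y - Df x * Ef y ∧
    Ef (x ++ y) = Tf x * Df y - Ef x * Ef y := by
  induction x with
  | nil => simp [contKsf, Tf, Df, Ef]
  | cons a x ih =>
    obtain ⟨h1, h2, h3, h4⟩ := ih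
    simp only [List.cons_append]
    refine ⟨?_, ?_, ?_, ?_⟩
    · rw [F_cons, h1, h2, F_cons, D_cons]; ring
    · show contKsf (x ++ y) = _
      rw [h1]
      show _ = contKsf x * contKsf y - Df x * Tf y
      ring
    · rw [D_cons, h3, h4, F_cons, D_cons]; ring
    · show Df (x ++ y) = _
      rw [h3]
      show _ = contKsf x * Df y - Df x * Ef y
      ring

lemma rev (l : List R) :
    contKsf l.reverse = contKsf l ∧ Tf l.reverse = Df l ∧
    Df l.reverse = Tf l ∧ Ef l.reverse = Ef l := by
  induction l with
  | nil => simp [Tf, Df, Ef]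
  | cons a l ih =>
    obtain ⟨h1, h2, h3, h4⟩ := ih
    obtain ⟨g1, g2, g3, g4⟩ := concat l.reverse [a]
    simp only [List.reverse_cons]
    have hFa : contKsf [a] = a := rfl
    have hTa : Tf [a] = (1 : R) := rfl
    have hDa : Df [a] = (1 : R) := rfl
    have hEa : Ef [a] = (0 : R) := rfl
    refine ⟨?_, ?_, ?_, ?_⟩
    · rw [g1, h1, h3, hFa, hTa, F_cons]; ring
    · rw [g2, h2, h4, hFa, hTa, D_cons]; ring
    · rw [g3, h1, h3, hDa, hEa]
      show _ = contKsf l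
      ring
    · rw [g4, h2, h4, hDa, hEa]
      show _ = Df l
      ring

lemma contKs_eq (l : List R) : contKs l = contKsf l := (rev l).1

lemma cycKs_append (x y : List R) (hx : x ≠ []) (hy : y ≠ []) :
    cycKs (x ++ y) = contKsf (x ++ y) - Ef (x ++ y) := by
  obtain ⟨a, x, rfl⟩ := List.exists_cons_of_ne_nil hx
  obtain ⟨b, y, rfl⟩ := List.exists_cons_of_ne_nil hy
  have h : ∃ c t, x ++ b :: y = c :: t := by cases x <;> exact ⟨_, _, rfl⟩
  obtain ⟨c, t, h⟩ := h
  simp only [List.cons_append, h]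
  unfold cycKs
  rw [contKs_eq, contKs_eq]
  rfl

lemma pos {S : Type*} [CommRing S] [LinearOrder S] [IsStrictOrderedRing S] (l : List S) (h : ∀ i ∈ l, 2 ≤ i) :
    0 ≤ Tf l ∧ Tf l + 1 ≤ contKsf l := by
  induction l with
  | nil => simp [Tf, contKsf]
  | cons a t ih =>
    have ht := ih (fun i hi => h i (List.mem_cons_of_mem _ hi))
    have ha : 2 ≤ a := h a (List.mem_cons_self (a := a) (l := t))
    constructor
    · show (0 : S) ≤ contKsf t
      linarith [ht.1, ht.2]
    · rw [F_cons]
      show contKsf t + 1 ≤ a * contKsf t - Tf t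
      nlinarith [ht.1, ht.2]

lemma coeList (l : List ℤ) : (l : List ℚ) = l.map (Int.cast) := by
  show l.flatMap (fun (a : ℤ) => [(a : ℚ)]) = _
  induction l with
  | nil => rfl
  | cons a t ih => simp [List.flatMap_cons, ih]

lemma valSCF_map (w : List ℤ) (hw : w ≠ []) :
    valSCF w = Tf (w.map (Int.cast : ℤ → ℚ)) / contKsf (w.map (Int.cast : ℤ → ℚ)) := by
  obtain ⟨a, t, rfl⟩ := List.exists_cons_of_ne_nil hw
  unfold valSCF
  rw [coeList, coeList, contKs_eq, contKs_eq]
  rfl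

end StmtAux

open StmtAux in
theorem stmt7 (u v : List ℤ) (hu : u ≠ []) (hv : v ≠ [])
    (h2 : ∀ i ∈ u ++ v, 2 ≤ i) :
    (cycKs (u.reverse ++ v) : ℚ) - (cycKs (u ++ v) : ℚ) =
      (valSCF u.reverse - valSCF u) * (valSCF v - valSCF v.reverse) *
        (contKs u : ℚ) * (contKs v : ℚ) := by
  set U : List ℚ := u.map (Int.cast) with hUdef
  set V : List ℚ := v.map (Int.cast) with hVdef
  have hU : U ≠ [] := by simp [hUdef, hu]
  have hV : V ≠ [] := by simp [hVdef, hv]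
  have hUr : U.reverse ≠ [] := by simp [hU]
  have hU2 : ∀ i ∈ U, (2 : ℚ) ≤ i := by
    intro i hi
    obtain ⟨j, hj, rfl⟩ := List.mem_map.mp hi
    exact_mod_cast h2 j (List.mem_append_left _ hj)
  have hV2 : ∀ i ∈ V, (2 : ℚ) ≤ i := by
    intro i hi
    obtain ⟨j, hj, rfl⟩ := List.mem_map.mp hi
    exact_mod_cast h2 j (List.mem_append_right _ hj)
  have hpu := pos U hU2
  have hpv := pos V hV2
  have hA : contKsf U ≠ 0 := by
    have : (0:ℚ) < contKsf U := by linarith [hpu.1, hpu.2]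
    exact this.ne'
  have hP : contKsf V ≠ 0 := by
    have : (0:ℚ) < contKsf V := by linarith [hpv.1, hpv.2]
    exact this.ne'
  have e1 : cycKs (U.reverse ++ V) =
      contKsf U * contKsf V - Tf U * Tf V - (Df U * Df V - Ef U * Ef V) := by
    rw [cycKs_append _ _ hUr hV, (concat U.reverse V).1, (concat U.reverse V).2.2.2,
      (rev U).1, (rev U).2.1, (rev U).2.2.1, (rev U).2.2.2]
  have e2 : cycKs (U ++ V) =
      contKsf U * contKsf V - Df U * Tf V - (Tf U * Df V - Ef U * Ef V) := by
    rw [cycKs_append _ _ hU hV, (concat U V).1, (concat U V).2.2.2]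
  have e3 : valSCF u = Tf U / contKsf U := valSCF_map u hu
  have e4 : valSCF v = Tf V / contKsf V := valSCF_map v hv
  have e5 : valSCF u.reverse = Df U / contKsf U := by
    rw [valSCF_map u.reverse (by simp [hu]), List.map_reverse, ← hUdef,
      (rev U).2.1, (rev U).1]
  have e6 : valSCF v.reverse = Df V / contKsf V := by
    rw [valSCF_map v.reverse (by simp [hv]), List.map_reverse, ← hVdef,
      (rev V).2.1, (rev V).1]
  have hcoe1 : ((u.reverse ++ v : List ℤ) : List ℚ) = U.reverse ++ V := by
    rw [coeList, List.map_append, List.map_reverse]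
  have hcoe2 : ((u ++ v : List ℤ) : List ℚ) = U ++ V := by
    rw [coeList, List.map_append]
  have hcoeu : ((u : List ℤ) : List ℚ) = U := by rw [coeList]
  have hcoev : ((v : List ℤ) : List ℚ) = V := by rw [coeList]
  rw [hcoe1, hcoe2, hcoeu, hcoev, e1, e2, e3, e4, e5, e6, contKs_eq, contKs_eq]
  field_simp
  ring
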